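/- Let {B_α} be a family of open balls in R^{N−1}_∞, corresponding to half-spaces Σ_α = {x ∈ H^N : ⟨x, v_α⟩ > 0} with space-like unit normals v_α. Then the boundary spheres ∂B_α have empty common intersection if and only if the subspace of R^{N+1} spanned by the v_α is either time-like or N-dimensional and space-like. -/

import Mathlib

/-- The Lorentz inner product on ℝ^{N+1}. -/
def lorentz {N : ℕ} (x y : Fin (N + 1) → ℝ) : ℝ :=
  (∑ i : Fin N, x i.castSucc * y i.castSucc) - x (Fin.last N) * y (Fin.last N)

/-- A subspace is time-like if it contains a time-like vector. -/
def IsTimelikeSub {N : ℕ} (V : Submodule ℝ (Fin (N + 1) → ℝ)) : Prop :=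
  ∃ x ∈ V, lorentz x x < 0

/-- A subspace is space-like if every non-zero element is space-like. -/
def IsSpacelikeSub {N : ℕ} (V : Submodule ℝ (Fin (N + 1) → ℝ)) : Prop :=
  ∀ x ∈ V, x ≠ 0 → 0 < lorentz x x

lemma lorentz_comm {N : ℕ} (x y : Fin (N+1) → ℝ) : lorentz x y = lorentz y x := by
  unfold lorentz
  rw [mul_comm (x (Fin.last N))]
  congr 1
  exact Finset.sum_congr rfl fun i _ => mul_comm _ _

lemma lorentz_add_left {N : ℕ} (x y z : Fin (N+1) → ℝ) :
    lorentz (x + y) z = lorentz x z + lorentz y z := by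
  simp [lorentz, add_mul, Finset.sum_add_distrib]; ring

lemma lorentz_smul_left {N : ℕ} (c : ℝ) (x z : Fin (N+1) → ℝ) :
    lorentz (c • x) z = c * lorentz x z := by
  simp only [lorentz, Pi.smul_apply, smul_eq_mul]
  rw [mul_sub, Finset.mul_sum]
  congr 1
  · exact Finset.sum_congr rfl fun i _ => by ring
  · ring

lemma lorentz_add_right {N : ℕ} (x y z : Fin (N+1) → ℝ) :
    lorentz x (y + z) = lorentz x y + lorentz x z := by
  rw [lorentz_comm, lorentz_add_left, lorentz_comm y, lorentz_comm z]

lemma lorentz_smul_right {N : ℕ} (c : ℝ) (x z : Fin (N+1) → ℝ) :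
    lorentz x (c • z) = c * lorentz x z := by
  rw [lorentz_comm, lorentz_smul_left, lorentz_comm]

def LB (N : ℕ) : LinearMap.BilinForm ℝ (Fin (N+1) → ℝ) :=
  LinearMap.mk₂ ℝ lorentz lorentz_add_left lorentz_smul_left lorentz_add_right lorentz_smul_right

@[simp] lemma LB_apply {N : ℕ} (x y : Fin (N+1) → ℝ) : LB N x y = lorentz x y := rfl

lemma lorentz_single_castSucc {N : ℕ} (u : Fin (N+1) → ℝ) (i : Fin N) :
    lorentz u (Pi.single (Fin.castSucc i) 1) = u (Fin.castSucc i) := by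
  simp [lorentz, Pi.single_apply, Fin.castSucc_inj, (Fin.castSucc_lt_last i).ne']

lemma lorentz_single_last {N : ℕ} (u : Fin (N+1) → ℝ) :
    lorentz u (Pi.single (Fin.last N) 1) = -(u (Fin.last N)) := by
  simp [lorentz, Pi.single_apply, (Fin.castSucc_lt_last _).ne]

lemma lorentz_zero_of_forall {N : ℕ} {u : Fin (N+1) → ℝ}
    (h : ∀ y, lorentz u y = 0) : u = 0 := by
  funext j
  induction j using Fin.lastCases with
  | last =>
    have := h (Pi.single (Fin.last N) 1)
    rw [lorentz_single_last] at this
    simpa using this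
  | cast i =>
    have := h (Pi.single (Fin.castSucc i) 1)
    rw [lorentz_single_castSucc] at this
    simpa using this

lemma LB_nondegenerate {N : ℕ} : (LB N).Nondegenerate := by
  refine ⟨fun u h => lorentz_zero_of_forall fun y => h y,
    fun u h => lorentz_zero_of_forall fun y => by rw [lorentz_comm]; exact h y⟩

lemma LB_isRefl {N : ℕ} : (LB N).IsRefl := by
  intro x y h
  simpa [lorentz_comm] using h

/-- Orthogonal complement of a timelike vector is spacelike. -/
lemma pos_of_perp_timelike {N : ℕ} {t x : Fin (N+1) → ℝ} (ht : lorentz t t < 0)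
    (hxt : lorentz x t = 0) (hx : x ≠ 0) : 0 < lorentz x x := by
  have hCS : (∑ i : Fin N, x i.castSucc * t i.castSucc)^2 ≤
      (∑ i : Fin N, x i.castSucc ^ 2) * (∑ i : Fin N, t i.castSucc ^ 2) :=
    Finset.sum_mul_sq_le_sq_mul_sq _ _ _
  set a := ∑ i : Fin N, x i.castSucc ^ 2 with ha
  set b := ∑ i : Fin N, t i.castSucc ^ 2 with hb
  have hax : lorentz x x = a - x (Fin.last N) ^ 2 := by
    simp only [lorentz, ha, sq]
  have hbt : lorentz t t = b - t (Fin.last N) ^ 2 := by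
    simp only [lorentz, hb, sq]
  have hxtc : (∑ i : Fin N, x i.castSucc * t i.castSucc) = x (Fin.last N) * t (Fin.last N) := by
    have := hxt; unfold lorentz at this; linarith
  have hb0 : 0 ≤ b := Finset.sum_nonneg fun i _ => sq_nonneg _
  have ha0 : 0 ≤ a := Finset.sum_nonneg fun i _ => sq_nonneg _
  have htL : 0 < t (Fin.last N) ^ 2 := by rw [hbt] at ht; nlinarith
  rcases eq_or_lt_of_le ha0 with h0 | hpos
  · -- a = 0 : all spatial components of x vanish, then last too, contra x ≠ 0
    exfalso
    apply hx
    have hzero : ∀ i : Fin N, x i.castSucc = 0 := by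
      intro i
      have := Finset.sum_eq_zero_iff_of_nonneg (fun i _ => sq_nonneg (x (Fin.castSucc i)))
        |>.mp h0.symm i (Finset.mem_univ i)
      exact pow_eq_zero_iff (by norm_num) |>.mp this
    have hlast : x (Fin.last N) = 0 := by
      have hsum : (∑ i : Fin N, x i.castSucc * t i.castSucc) = 0 :=
        Finset.sum_eq_zero fun i _ => by rw [hzero i, zero_mul]
      rw [hsum] at hxtc
      have := mul_eq_zero.mp hxtc.symm
      rcases this with h | h
      · exact h
      · exact absurd (by rw [h]; ring) (ne_of_gt htL)
    funext j
    induction j using Fin.lastCases with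
    | last => simpa using hlast
    | cast i => simpa using hzero i
  · rw [hax]
    rw [hxtc] at hCS
    rw [hbt] at ht
    nlinarith [sq_nonneg (x (Fin.last N)), sq_nonneg (t (Fin.last N))]

/-- Cauchy–Schwarz for a semidefinite restriction: null vectors are in the kernel. -/
lemma null_orth {N : ℕ} {V : Submodule ℝ (Fin (N+1) → ℝ)}
    (hsemi : ∀ x ∈ V, 0 ≤ lorentz x x) {x y : Fin (N+1) → ℝ}
    (hx : x ∈ V) (hy : y ∈ V) (hxx : lorentz x x = 0) : lorentz x y = 0 := by
  set b := lorentz x y with hbdef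
  set q := lorentz y y with hqdef
  have hq : 0 ≤ q := hsemi y hy
  have key : ∀ s : ℝ, 0 ≤ 2*s*b + s^2*q := by
    intro s
    have h := hsemi (x + s • y) (V.add_mem hx (V.smul_mem s hy))
    rw [lorentz_add_left, lorentz_add_right, lorentz_add_right, lorentz_smul_left,
      lorentz_smul_right, lorentz_smul_left, lorentz_smul_right, hxx] at h
    have hc : lorentz y x = b := lorentz_comm y x
    rw [hc] at h
    nlinarith [h]
  have h1 := key (-(b)/(q+1))
  have hq1 : (0:ℝ) < q + 1 := by linarith
  have h2 : 0 ≤ (2 * (-b / (q + 1)) * b + (-b / (q + 1)) ^ 2 * q) * (q+1)^2 :=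
    mul_nonneg h1 (by positivity)
  have h3 : (2 * (-b / (q + 1)) * b + (-b / (q + 1)) ^ 2 * q) * (q+1)^2 = -(b^2*(q+2)) := by
    field_simp
    ring
  rw [h3] at h2
  nlinarith [sq_nonneg b]

lemma lorentz_sub_left {N : ℕ} (x y z : Fin (N+1) → ℝ) :
    lorentz (x - y) z = lorentz x z - lorentz y z := by
  have := lorentz_add_left (x - y) y z
  rw [sub_add_cancel] at this
  linarith


/-- Let half-spaces of the hyperboloid H^N be given by space-like unit normals v_α; a
common point of the ideal boundary spheres ∂B_α corresponds to a non-zero light-like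
vector orthogonal to every v_α.  The boundary spheres have empty common intersection
if and only if the span of the v_α is time-like, or N-dimensional and space-like. -/
theorem stmt_12 {N : ℕ} {A : Type*} (v : A → Fin (N + 1) → ℝ)
    (hv : ∀ α : A, lorentz (v α) (v α) = 1) :
    (¬ ∃ u : Fin (N + 1) → ℝ, u ≠ 0 ∧ lorentz u u = 0 ∧ ∀ α : A, lorentz u (v α) = 0) ↔
    (IsTimelikeSub (Submodule.span ℝ (Set.range v)) ∨
      (Module.finrank ℝ (Submodule.span ℝ (Set.range v)) = N ∧
        IsSpacelikeSub (Submodule.span ℝ (Set.range v)))) := by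
  set V := Submodule.span ℝ (Set.range v) with hV
  have hmemV : ∀ α, v α ∈ V := fun α => Submodule.subset_span (Set.mem_range_self α)
  have hperp_span : ∀ (u : Fin (N+1) → ℝ), (∀ α, lorentz u (v α) = 0) →
      ∀ x ∈ V, lorentz u x = 0 := by
    intro u hu x hx
    have hle : V ≤ LinearMap.ker ((LB N) u) := Submodule.span_le.mpr (by
      rintro _ ⟨α, rfl⟩
      simpa using hu α)
    simpa using hle hx
  constructor
  · -- forward
    intro h
    by_contra hR
    rw [not_or] at hR
    obtain ⟨hnt, hother⟩ := hR
    have hsemi : ∀ x ∈ V, 0 ≤ lorentz x x := by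
      intro x hx
      by_contra hc
      exact hnt ⟨x, hx, not_le.mp hc⟩
    by_cases hsp : IsSpacelikeSub V
    · -- spacelike case : dim < N, construct null vector in orthogonal complement
      have hdim : Module.finrank ℝ V ≠ N := fun hd => hother ⟨hd, hsp⟩
      set W := (LB N).orthogonal V with hW
      have hfinW : Module.finrank ℝ W = (N+1) - Module.finrank ℝ V := by
        have := LinearMap.BilinForm.finrank_orthogonal (LB_nondegenerate (N := N)) V
        simpa [Module.finrank_fin_fun] using this
      have hVle : Module.finrank ℝ V ≤ N := by
        by_contra hle
        push_neg at hle
        have hle2 : Module.finrank ℝ V ≤ N + 1 := by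
          simpa [Module.finrank_fin_fun] using Submodule.finrank_le V
        have heq : Module.finrank ℝ V = N + 1 := by omega
        have hVtop : V = ⊤ := Submodule.eq_top_of_finrank_eq
          (by simp [heq, Module.finrank_fin_fun])
        have h2 : (0:ℝ) ≤ lorentz (Pi.single (Fin.last N) (1:ℝ)) (Pi.single (Fin.last N) 1) :=
          hsemi _ (hVtop ▸ Submodule.mem_top)
        rw [lorentz_single_last] at h2
        simp at h2
        linarith
      have hdlt : Module.finrank ℝ V < N := lt_of_le_of_ne hVle hdim
      have hinf : V ⊓ W = ⊥ := by
        rw [eq_bot_iff]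
        rintro x ⟨hxV, hxW⟩
        have hxx : lorentz x x = 0 := by
          simpa using (LinearMap.BilinForm.mem_orthogonal_iff.mp hxW) x hxV
        rw [Submodule.mem_bot]
        by_contra hx0
        have := hsp x hxV hx0
        rw [hxx] at this
        exact lt_irrefl 0 this
      have hsup : V ⊔ W = ⊤ := by
        apply Submodule.eq_top_of_finrank_eq
        have hs := Submodule.finrank_sup_add_finrank_inf_eq V W
        rw [hinf] at hs
        simp only [finrank_bot, add_zero] at hs
        rw [Module.finrank_fin_fun]
        omega
      obtain ⟨p, hp, q, hq, hpq⟩ := Submodule.mem_sup.mp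
        (hsup ▸ Submodule.mem_top : Pi.single (Fin.last N) (1:ℝ) ∈ V ⊔ W)
      have hBpq : lorentz p q = 0 := by
        simpa using (LinearMap.BilinForm.mem_orthogonal_iff.mp hq) p hp
      have hqp : lorentz q p = 0 := by rw [lorentz_comm]; exact hBpq
      have heL : lorentz (Pi.single (Fin.last N) (1:ℝ)) (Pi.single (Fin.last N) (1:ℝ)) = -1 := by
        rw [lorentz_single_last]
        simp
      have hqq : lorentz q q ≤ -1 := by
        have hexp : lorentz (p + q) (p + q)
            = lorentz p p + lorentz p q + lorentz q p + lorentz q q := by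
          rw [lorentz_add_left, lorentz_add_right, lorentz_add_right]
          ring
        rw [hpq, heL, hBpq, hqp] at hexp
        have hpp := hsemi p hp
        linarith
      have htt : lorentz q q < 0 := lt_of_le_of_lt hqq (by norm_num)
      have ht0 : q ≠ 0 := by
        intro h0
        rw [h0] at htt
        simp [lorentz] at htt
      have hWnle : ¬ (W ≤ (ℝ ∙ q)) := by
        intro hle
        have hmono := Submodule.finrank_mono hle
        rw [finrank_span_singleton ht0] at hmono
        omega
      obtain ⟨w, hwW, hwt⟩ := SetLike.not_le_iff_exists.mp hWnle
      set s := w - (lorentz w q / lorentz q q) • q with hs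
      have hsW : s ∈ W := Submodule.sub_mem W hwW (Submodule.smul_mem W _ hq)
      have hst : lorentz s q = 0 := by
        rw [hs, lorentz_sub_left, lorentz_smul_left, div_mul_cancel₀ _ (ne_of_lt htt), sub_self]
      have hs0 : s ≠ 0 := by
        intro h0
        apply hwt
        rw [sub_eq_zero] at h0
        rw [h0]
        exact Submodule.smul_mem _ _ (Submodule.mem_span_singleton_self q)
      have hss : 0 < lorentz s s := pos_of_perp_timelike htt hst hs0
      set k := Real.sqrt (-(lorentz q q) / lorentz s s) with hk
      have hk2 : k^2 = -(lorentz q q) / lorentz s s :=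
        Real.sq_sqrt (div_nonneg (neg_nonneg.mpr htt.le) hss.le)
      set u := q + k • s with hu
      have hts : lorentz q s = 0 := by rw [lorentz_comm]; exact hst
      have hkk : k * (k * lorentz s s) = -(lorentz q q) := by
        rw [← mul_assoc, ← sq, hk2]
        field_simp
      have huu : lorentz u u = 0 := by
        rw [hu, lorentz_add_left, lorentz_add_right, lorentz_add_right, lorentz_smul_left,
          lorentz_smul_right, lorentz_smul_right, lorentz_smul_left, hst, hts, hkk]
        ring
      have hut : lorentz u q = lorentz q q := by
        rw [hu, lorentz_add_left, lorentz_smul_left, hst]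
        ring
      have hzero : lorentz (0 : Fin (N+1) → ℝ) q = 0 := by simp [lorentz]
      have hu0 : u ≠ 0 := by
        intro h0
        rw [h0, hzero] at hut
        exact absurd hut.symm (ne_of_lt htt)
      have huW : u ∈ W := Submodule.add_mem W hq (Submodule.smul_mem W _ hsW)
      exact h ⟨u, hu0, huu, fun α => by
        have h3 := (LinearMap.BilinForm.mem_orthogonal_iff.mp huW) (v α) (hmemV α)
        rw [lorentz_comm]
        simpa using h3⟩
    · -- not spacelike: a null vector inside V itself
      unfold IsSpacelikeSub at hsp
      push_neg at hsp
      obtain ⟨x, hxV, hx0, hxle⟩ := hsp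
      have hxx : lorentz x x = 0 := le_antisymm hxle (hsemi x hxV)
      exact h ⟨x, hx0, hxx, fun α => null_orth hsemi hxV (hmemV α) hxx⟩
  · -- reverse
    rintro hR ⟨u, hu0, huu, hperp⟩
    have huV : ∀ x ∈ V, lorentz u x = 0 := hperp_span u hperp
    rcases hR with ⟨t, htV, htt⟩ | ⟨hdim, hsp⟩
    · have hut : lorentz u t = 0 := huV t htV
      have := pos_of_perp_timelike htt hut hu0
      rw [huu] at this
      exact lt_irrefl 0 this
    · have huVmem : u ∉ V := by
        intro hmem
        have := hsp u hmem hu0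
        rw [huu] at this
        exact lt_irrefl 0 this
      have hinf : V ⊓ (ℝ ∙ u) = ⊥ := by
        rw [eq_bot_iff]
        rintro x ⟨hxV, hxu⟩
        obtain ⟨c, rfl⟩ := Submodule.mem_span_singleton.mp hxu
        rw [Submodule.mem_bot]
        rcases eq_or_ne c 0 with rfl | hc
        · simp
        · exact absurd ((Submodule.smul_mem_iff V hc).mp hxV) huVmem
      have hsup : V ⊔ (ℝ ∙ u) = ⊤ := by
        apply Submodule.eq_top_of_finrank_eq
        have hs := Submodule.finrank_sup_add_finrank_inf_eq V (ℝ ∙ u)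
        rw [hinf, finrank_span_singleton hu0] at hs
        simp only [finrank_bot, add_zero] at hs
        rw [Module.finrank_fin_fun]
        omega
      apply hu0
      apply lorentz_zero_of_forall
      intro y
      obtain ⟨a, ha, z, hz, hyz⟩ := Submodule.mem_sup.mp
        (hsup ▸ Submodule.mem_top : y ∈ V ⊔ (ℝ ∙ u))
      obtain ⟨c, rfl⟩ := Submodule.mem_span_singleton.mp hz
      rw [← hyz, lorentz_add_right, lorentz_smul_right, huV a ha, huu]
      ring
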